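/- For every c > 0, the map F_c is monotone with respect to the stochastic order: if μ₁ ⪯ μ₂ then F_c(μ₁) ⪯ F_c(μ₂). -/

import Mathlib

open Filter Topology Set

noncomputable section

/-- Convolution of two (sub)probability mass functions on `ℕ∞ = ℕ⁺ ∪ {∞} ∪ {0}`,
with the convention `∞ + anything = ∞`. -/
def conv (μ ν : ℕ∞ → ℝ) : ℕ∞ → ℝ :=
  fun k => ∑' p : ℕ∞ × ℕ∞, if p.1 + p.2 = k then μ p.1 * ν p.2 else 0

/-- The factor `(l(l-1)/2) / (l(l-1)/2 + c)`, the probability that the coalescence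
from `l` to `l-1` lineages happens before an independent `Exp(c)` time. -/
def kingmanFactor (c : ℝ) (l : ℕ) : ℝ :=
  ((l : ℝ) * ((l : ℝ) - 1) / 2) / ((l : ℝ) * ((l : ℝ) - 1) / 2 + c)

/-- `pK c j i` : the probability that Kingman's coalescent started from `j` lineages
has exactly `i` lineages at an independent exponential time with rate `c`. -/
def pK (c : ℝ) (j : ℕ∞) (i : ℕ) : ℝ :=
  (c / ((i : ℝ) * ((i : ℝ) - 1) / 2 + c)) *
    (if j = ⊤ then ∏' l : ℕ, kingmanFactor c (i + 1 + l)
     else ∏ l ∈ Finset.Icc (i + 1) j.toNat, kingmanFactor c l)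

/-- The mass that `F_c μ` puts on a finite `k ∈ ℕ⁺`. -/
def FcFin (c : ℝ) (μ : ℕ∞ → ℝ) (k : ℕ) : ℝ :=
  ∑' j : ℕ∞, if (k : ℕ∞) ≤ j then conv μ μ j * pK c j k else 0

/-- The map `F_c` on distributions on `ℕ⁺ ∪ {∞}`; the mass at `∞` is the remaining mass. -/
def Fc (c : ℝ) (μ : ℕ∞ → ℝ) : ℕ∞ → ℝ :=
  fun k =>
    if k = ⊤ then 1 - ∑' n : ℕ, FcFin c μ n
    else if k = 0 then 0 else FcFin c μ k.toNat

/-- `μ` is a probability distribution on `ℕ⁺ ∪ {∞}` (no mass at `0`). -/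
def IsDist (μ : ℕ∞ → ℝ) : Prop :=
  (∀ k, 0 ≤ μ k) ∧ μ 0 = 0 ∧ HasSum μ 1

/-- The mean of a distribution on `ℕ⁺ ∪ {∞}` (ignoring the mass at `∞`). -/
def distMean (μ : ℕ∞ → ℝ) : ℝ := ∑' n : ℕ, (n : ℝ) * μ (n : ℕ∞)

/-- `μ` belongs to `S₁`: a probability distribution on `ℕ⁺` with finite mean. -/
def MemS1 (μ : ℕ∞ → ℝ) : Prop :=
  IsDist μ ∧ μ ⊤ = 0 ∧ Summable (fun n : ℕ => (n : ℝ) * μ (n : ℕ∞))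

/-- `StDom μ ν` : `μ ⪯ ν` in the usual stochastic order, i.e.
`μ([0,x]) ≥ ν([0,x])` for all `x ∈ [0,∞]`. -/
def StDom (μ ν : ℕ∞ → ℝ) : Prop :=
  ∀ x : ℕ∞, (∑' k : ℕ∞, if k ≤ x then ν k else 0) ≤ ∑' k : ℕ∞, if k ≤ x then μ k else 0

/-- The unit point mass at `a`. -/
def delta (a : ℕ∞) : ℕ∞ → ℝ := fun k => if k = a then 1 else 0

end

section Part1

variable {c : ℝ}

lemma half_nonneg' (l : ℕ) : 0 ≤ (l : ℝ) * ((l : ℝ) - 1) / 2 := by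
  rcases l with _ | n
  · norm_num
  · have : (0:ℝ) ≤ (n:ℝ) := Nat.cast_nonneg n
    push_cast
    nlinarith

lemma denom_pos (hc : 0 < c) (l : ℕ) : 0 < (l : ℝ) * ((l : ℝ) - 1) / 2 + c := by
  linarith [half_nonneg' l]

lemma kf_nonneg (hc : 0 < c) (l : ℕ) : 0 ≤ kingmanFactor c l :=
  div_nonneg (half_nonneg' l) (denom_pos hc l).le

lemma kf_le_one (hc : 0 < c) (l : ℕ) : kingmanFactor c l ≤ 1 := by
  unfold kingmanFactor
  rw [div_le_one (denom_pos hc l)]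
  linarith

lemma prod_anti_of_le_one {f : ℕ → ℝ} (h0 : ∀ l, 0 ≤ f l) (h1 : ∀ l, f l ≤ 1)
    {s t : Finset ℕ} (hst : s ⊆ t) : ∏ l ∈ t, f l ≤ ∏ l ∈ s, f l := by
  classical
  rw [← Finset.prod_sdiff hst]
  have h2 : ∏ l ∈ t \ s, f l ≤ 1 :=
    Finset.prod_le_one (fun i _ => h0 i) (fun i _ => h1 i)
  have h3 : 0 ≤ ∏ l ∈ s, f l := Finset.prod_nonneg (fun i _ => h0 i)
  nlinarith [Finset.prod_nonneg (fun i (_ : i ∈ t \ s) => h0 i)]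

lemma multipliable_of_le_one {f : ℕ → ℝ} (h0 : ∀ l, 0 ≤ f l) (h1 : ∀ l, f l ≤ 1) :
    Multipliable f := by
  refine ⟨⨅ s : Finset ℕ, ∏ l ∈ s, f l, ?_⟩
  have hanti : Antitone (fun s : Finset ℕ => ∏ l ∈ s, f l) :=
    fun s t hst => prod_anti_of_le_one h0 h1 hst
  have hbdd : BddBelow (Set.range fun s : Finset ℕ => ∏ l ∈ s, f l) :=
    ⟨0, by rintro x ⟨s, rfl⟩; exact Finset.prod_nonneg (fun i _ => h0 i)⟩
  exact tendsto_atTop_ciInf hanti hbdd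

lemma tprod_le_prod_of_le_one {f : ℕ → ℝ} (h0 : ∀ l, 0 ≤ f l) (h1 : ∀ l, f l ≤ 1)
    (s : Finset ℕ) : ∏' l, f l ≤ ∏ l ∈ s, f l := by
  refine le_of_tendsto (multipliable_of_le_one h0 h1).hasProd ?_
  exact eventually_atTop.2 ⟨s, fun t hts => prod_anti_of_le_one h0 h1 hts⟩

lemma tprod_nonneg_of_le_one {f : ℕ → ℝ} (h0 : ∀ l, 0 ≤ f l) (h1 : ∀ l, f l ≤ 1) :
    0 ≤ ∏' l, f l := by
  refine ge_of_tendsto (multipliable_of_le_one h0 h1).hasProd ?_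
  exact Eventually.of_forall (fun t => Finset.prod_nonneg (fun i _ => h0 i))

lemma tprod_le_one_of_le_one {f : ℕ → ℝ} (h0 : ∀ l, 0 ≤ f l) (h1 : ∀ l, f l ≤ 1) :
    ∏' l, f l ≤ 1 := by
  simpa using tprod_le_prod_of_le_one h0 h1 ∅

lemma pk_nonneg (hc : 0 < c) (j : ℕ∞) (i : ℕ) : 0 ≤ pK c j i := by
  unfold pK
  refine mul_nonneg (div_nonneg hc.le (denom_pos hc i).le) ?_
  split
  · exact tprod_nonneg_of_le_one (fun l => kf_nonneg hc _) (fun l => kf_le_one hc _)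
  · exact Finset.prod_nonneg (fun l _ => kf_nonneg hc l)

lemma pk_le_one (hc : 0 < c) (j : ℕ∞) (i : ℕ) : pK c j i ≤ 1 := by
  unfold pK
  have h1 : c / ((i : ℝ) * ((i : ℝ) - 1) / 2 + c) ≤ 1 := by
    rw [div_le_one (denom_pos hc i)]
    linarith [half_nonneg' i]
  have h0 : 0 ≤ c / ((i : ℝ) * ((i : ℝ) - 1) / 2 + c) :=
    div_nonneg hc.le (denom_pos hc i).le
  refine mul_le_one₀ h1 ?_ ?_
  · split
    · exact tprod_nonneg_of_le_one (fun l => kf_nonneg hc _) (fun l => kf_le_one hc _)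
    · exact Finset.prod_nonneg (fun l _ => kf_nonneg hc l)
  · split
    · exact tprod_le_one_of_le_one (fun l => kf_nonneg hc _) (fun l => kf_le_one hc _)
    · exact Finset.prod_le_one (fun l _ => kf_nonneg hc l) (fun l _ => kf_le_one hc l)

lemma prod_Icc_eq_range (f : ℕ → ℝ) (a n : ℕ) :
    ∏ l ∈ Finset.Icc (a + 1) (a + n), f l = ∏ i ∈ Finset.range n, f (a + 1 + i) := by
  induction n with
  | zero => simp
  | succ n ih =>
      rw [show a + (n+1) = (a + n) + 1 by omega,
        Finset.prod_Icc_succ_top (by omega), ih, Finset.prod_range_succ]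
      congr 2
      omega

lemma pk_top_le (hc : 0 < c) (k J : ℕ) : pK c ⊤ k ≤ pK c (J : ℕ∞) k := by
  unfold pK
  rw [if_pos rfl, if_neg (by exact_mod_cast WithTop.coe_ne_top)]
  refine mul_le_mul_of_nonneg_left ?_ (div_nonneg hc.le (denom_pos hc k).le)
  rcases le_or_gt J k with hJk | hkJ
  · have : Finset.Icc (k + 1) (J : ℕ∞).toNat = ∅ := by
      rw [Finset.Icc_eq_empty_iff]
      simp [ENat.toNat_coe]
      omega
    rw [this]
    simpa using tprod_le_one_of_le_one (fun l => kf_nonneg hc _) (fun l => kf_le_one hc _)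
  · have hJ : (J : ℕ∞).toNat = k + (J - k) := by simp [ENat.toNat_coe]; omega
    rw [hJ, prod_Icc_eq_range]
    exact tprod_le_prod_of_le_one (fun l => kf_nonneg hc _) (fun l => kf_le_one hc _) _

lemma pk_coe (J k : ℕ) :
    pK c (J : ℕ∞) k = (c / ((k : ℝ) * ((k : ℝ) - 1) / 2 + c)) *
      ∏ l ∈ Finset.Icc (k + 1) J, kingmanFactor c l := by
  unfold pK
  rw [if_neg (by exact_mod_cast WithTop.coe_ne_top), ENat.toNat_coe]

lemma pk_succ (hc : 0 < c) {k J : ℕ} (hkJ : k ≤ J) :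
    pK c ((J + 1 : ℕ) : ℕ∞) k = pK c (J : ℕ∞) k * kingmanFactor c (J + 1) := by
  rw [pk_coe, pk_coe, Finset.prod_Icc_succ_top (by omega), mul_assoc]

lemma sum_pk_eq_one (hc : 0 < c) {J : ℕ} (hJ : 1 ≤ J) :
    ∑ k ∈ Finset.Icc 1 J, pK c (J : ℕ∞) k = 1 := by
  induction J with
  | zero => omega
  | succ J ih =>
      rcases Nat.eq_or_lt_of_le hJ with h1 | h2
      · rw [← h1, Finset.Icc_self, Finset.sum_singleton, pk_coe,
          Finset.Icc_eq_empty (by omega)]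
        norm_num [div_self hc.ne']
      · have hJ1 : 1 ≤ J := by omega
        rw [Finset.sum_Icc_succ_top (by omega)]
        have hstep : ∀ k ∈ Finset.Icc 1 J, pK c ((J + 1 : ℕ) : ℕ∞) k
            = pK c (J : ℕ∞) k * kingmanFactor c (J + 1) := by
          intro k hk
          rw [Finset.mem_Icc] at hk
          exact pk_succ hc hk.2
        rw [Finset.sum_congr rfl hstep, ← Finset.sum_mul, ih hJ1, one_mul, pk_coe,
          Finset.Icc_eq_empty (by omega)]
        simp only [Finset.prod_empty, mul_one]
        unfold kingmanFactor
        have hd := denom_pos hc (J + 1)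
        push_cast at hd ⊢
        field_simp
        exact div_self (ne_of_gt (by linarith))

end Part1

section Part2

variable {c : ℝ}

noncomputable def gfun (c : ℝ) (m : ℕ) : ℕ∞ → ℝ := fun j =>
  if j = 0 then 1
  else ∑ k ∈ Finset.Icc 1 m, (if (k : ℕ∞) ≤ j then pK c j k else 0)

lemma g_coe {m J : ℕ} (hJ : 1 ≤ J) :
    gfun c m (J : ℕ∞) = ∑ k ∈ Finset.Icc 1 (min m J), pK c (J : ℕ∞) k := by
  classical
  unfold gfun
  have hJ0 : ((J : ℕ∞)) ≠ 0 := by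
    simp only [ne_eq, Nat.cast_eq_zero]
    omega
  rw [if_neg hJ0, ← Finset.sum_filter]
  congr 1
  ext a
  simp only [Finset.mem_filter, Finset.mem_Icc, Nat.cast_le, le_min_iff]
  constructor
  · rintro ⟨⟨h1, h2⟩, h3⟩; exact ⟨h1, h2, h3⟩
  · rintro ⟨h1, h2, h3⟩; exact ⟨⟨h1, h2⟩, h3⟩

lemma g_top (m : ℕ) : gfun c m ⊤ = ∑ k ∈ Finset.Icc 1 m, pK c ⊤ k := by
  unfold gfun
  rw [if_neg (by simp)]
  exact Finset.sum_congr rfl fun k _ => if_pos le_top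

lemma g_nonneg (hc : 0 < c) (m : ℕ) (j : ℕ∞) : 0 ≤ gfun c m j := by
  unfold gfun
  split
  · norm_num
  · refine Finset.sum_nonneg fun k _ => ?_
    split
    · exact pk_nonneg hc _ _
    · exact le_refl 0

lemma g_coe_le_one (hc : 0 < c) (m J : ℕ) : gfun c m (J : ℕ∞) ≤ 1 := by
  rcases Nat.eq_zero_or_pos J with rfl | hJ
  · unfold gfun
    rw [if_pos (by norm_num)]
  · rw [g_coe hJ]
    calc ∑ k ∈ Finset.Icc 1 (min m J), pK c (J : ℕ∞) k
        ≤ ∑ k ∈ Finset.Icc 1 J, pK c (J : ℕ∞) k := by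
          refine Finset.sum_le_sum_of_subset_of_nonneg ?_ fun k _ _ => pk_nonneg hc _ _
          exact Finset.Icc_subset_Icc le_rfl (min_le_right _ _)
      _ = 1 := sum_pk_eq_one hc hJ

lemma g_top_le_coe (hc : 0 < c) {m J : ℕ} (hmJ : m ≤ J) :
    gfun c m ⊤ ≤ gfun c m (J : ℕ∞) := by
  rcases Nat.eq_zero_or_pos m with rfl | hm
  · rw [g_top]
    simpa using g_nonneg hc 0 (J : ℕ∞)
  · have hJ : 1 ≤ J := le_trans hm hmJ
    rw [g_top, g_coe hJ, min_eq_left hmJ]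
    exact Finset.sum_le_sum fun k _ => pk_top_le hc k J

lemma g_succ_le (hc : 0 < c) (m J : ℕ) :
    gfun c m ((J + 1 : ℕ) : ℕ∞) ≤ gfun c m (J : ℕ∞) := by
  rcases Nat.eq_zero_or_pos J with rfl | hJ
  · have : gfun c m ((0 : ℕ) : ℕ∞) = 1 := by unfold gfun; rw [if_pos (by norm_num)]
    rw [this]
    exact g_coe_le_one hc m 1
  · rcases le_or_gt m J with hmJ | hJm
    · rw [g_coe hJ, g_coe (by omega), min_eq_left hmJ, min_eq_left (by omega)]
      refine Finset.sum_le_sum fun k hk => ?_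
      rw [Finset.mem_Icc] at hk
      rw [pk_succ hc (le_trans hk.2 hmJ)]
      exact mul_le_of_le_one_right (pk_nonneg hc _ _) (kf_le_one hc _)
    · rw [g_coe hJ, min_eq_right hJm.le, sum_pk_eq_one hc hJ]
      exact g_coe_le_one hc m (J + 1)

lemma g_anti (hc : 0 < c) (m : ℕ) : Antitone (gfun c m) := by
  have hnat : Antitone fun J : ℕ => gfun c m (J : ℕ∞) :=
    antitone_nat_of_succ_le fun J => g_succ_le hc m J
  have htop : ∀ J : ℕ, gfun c m ⊤ ≤ gfun c m (J : ℕ∞) := fun J =>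
    le_trans (g_top_le_coe hc (le_max_left m J)) (hnat (le_max_right m J))
  intro a b hab
  induction b using ENat.recTopCoe with
  | top =>
      induction a using ENat.recTopCoe with
      | top => exact le_rfl
      | coe n => exact htop n
  | coe J =>
      induction a using ENat.recTopCoe with
      | top => simp at hab
      | coe I => exact hnat (by exact_mod_cast hab)

lemma g_le_one (hc : 0 < c) (m : ℕ) (j : ℕ∞) : gfun c m j ≤ 1 := by
  induction j using ENat.recTopCoe with
  | top => exact le_trans (g_top_le_coe hc (le_refl m)) (g_coe_le_one hc m m)
  | coe J => exact g_coe_le_one hc m J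

end Part2

section Part3

lemma enat_ne_top_cases (k : ℕ∞) (hk : k ≠ ⊤) : ∃ n : ℕ, k = (n : ℕ∞) := by
  induction k using ENat.recTopCoe with
  | top => exact absurd rfl hk
  | coe n => exact ⟨n, rfl⟩

lemma enat_supp_cast {f : ℕ∞ → ℝ} :
    ∀ x ∉ Set.range ((↑) : ℕ → ℕ∞), (if x = ⊤ then 0 else f x) = 0 := by
  intro x hx
  rw [if_pos ?_]
  by_contra hxt
  obtain ⟨n, rfl⟩ := enat_ne_top_cases x hxt
  exact hx ⟨n, rfl⟩

lemma summable_enat_ite {f : ℕ∞ → ℝ} (hf : Summable fun n : ℕ => f (n : ℕ∞)) :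
    Summable (fun k : ℕ∞ => if k = ⊤ then 0 else f k) := by
  rw [← Function.Injective.summable_iff
    (Nat.cast_injective : Function.Injective ((↑) : ℕ → ℕ∞)) enat_supp_cast]
  refine hf.congr fun n => ?_
  simp only [Function.comp_apply]
  rw [if_neg (by exact_mod_cast WithTop.coe_ne_top)]

lemma tsum_enat_ite {f : ℕ∞ → ℝ} (hf : Summable fun n : ℕ => f (n : ℕ∞)) :
    ∑' k : ℕ∞, (if k = ⊤ then 0 else f k) = ∑' n : ℕ, f (n : ℕ∞) := by
  rw [← Function.Injective.tsum_eq
    (Nat.cast_injective : Function.Injective ((↑) : ℕ → ℕ∞))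
    (fun x hx => by by_contra hr; exact hx (enat_supp_cast x hr))]
  exact tsum_congr fun n => by rw [if_neg (by exact_mod_cast WithTop.coe_ne_top)]

lemma summable_enat_top : Summable (fun k : ℕ∞ => if k = ⊤ then (1:ℝ) else 0) → True := fun _ => trivial

lemma summable_ite_top {f : ℕ∞ → ℝ} :
    Summable (fun k : ℕ∞ => if k = ⊤ then f k else 0) := by
  refine summable_of_ne_finset_zero (s := {⊤}) fun k hk => ?_
  rw [if_neg (by simpa using hk)]

lemma tsum_ite_top (f : ℕ∞ → ℝ) :
    ∑' k : ℕ∞, (if k = ⊤ then f k else 0) = f ⊤ := by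
  rw [show (fun k : ℕ∞ => if k = ⊤ then f k else 0)
      = fun k : ℕ∞ => if k = ⊤ then f ⊤ else 0 from
    funext fun k => by split <;> simp_all]
  exact tsum_ite_eq ⊤ (fun _ => f ⊤)

lemma summable_enat {f : ℕ∞ → ℝ} (hf : Summable fun n : ℕ => f (n : ℕ∞)) :
    Summable f := by
  have : f = (fun k : ℕ∞ => if k = ⊤ then 0 else f k)
      + (fun k : ℕ∞ => if k = ⊤ then f k else 0) := by
    funext k
    by_cases hk : k = ⊤ <;> simp [hk]
  rw [this]
  exact (summable_enat_ite hf).add summable_ite_top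

lemma tsum_enat_split {f : ℕ∞ → ℝ} (hf : Summable fun n : ℕ => f (n : ℕ∞)) :
    ∑' k : ℕ∞, f k = (∑' n : ℕ, f (n : ℕ∞)) + f ⊤ := by
  have heq : f = (fun k : ℕ∞ => if k = ⊤ then 0 else f k)
      + (fun k : ℕ∞ => if k = ⊤ then f k else 0) := by
    funext k
    by_cases hk : k = ⊤ <;> simp [hk]
  calc ∑' k : ℕ∞, f k
      = ∑' k : ℕ∞, ((if k = ⊤ then 0 else f k) + (if k = ⊤ then f k else 0)) := by
        exact tsum_congr fun k => by by_cases hk : k = ⊤ <;> simp [hk]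
    _ = (∑' k : ℕ∞, (if k = ⊤ then 0 else f k)) + ∑' k : ℕ∞, (if k = ⊤ then f k else 0) :=
        Summable.tsum_add (summable_enat_ite hf) summable_ite_top
    _ = (∑' n : ℕ, f (n : ℕ∞)) + f ⊤ := by rw [tsum_enat_ite hf, tsum_ite_top]

end Part3

section Part4

lemma key_mono {μ ν : ℕ∞ → ℝ} (hμ0 : ∀ k, 0 ≤ μ k) (hν0 : ∀ k, 0 ≤ ν k)
    (hμ1 : HasSum μ 1) (hν1 : HasSum ν 1) (h : StDom μ ν)
    {f : ℕ∞ → ℝ} (hfa : Antitone f) (hft : 0 ≤ f ⊤) (hf0 : f 0 ≤ 1) :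
    ∑' k, ν k * f k ≤ ∑' k, μ k * f k := by
  classical
  -- basic bounds on f
  have hfnn : ∀ k, 0 ≤ f k := fun k => le_trans hft (hfa le_top)
  have hfle1 : ∀ k, f k ≤ 1 := fun k => le_trans (hfa (zero_le : 0 ≤ k)) hf0
  -- the limit L of f along ℕ
  set L : ℝ := ⨅ n : ℕ, f (n : ℕ∞) with hL
  have hbdd : BddBelow (Set.range fun n : ℕ => f (n : ℕ∞)) :=
    ⟨f ⊤, by rintro x ⟨n, rfl⟩; exact hfa le_top⟩
  have hLf : f ⊤ ≤ L := le_ciInf fun n => hfa le_top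
  have hLle : ∀ n : ℕ, L ≤ f (n : ℕ∞) := fun n => ciInf_le hbdd n
  have hfanti : Antitone fun n : ℕ => f (n : ℕ∞) := fun a b hab => hfa (by exact_mod_cast hab)
  have hftend : Tendsto (fun n : ℕ => f (n : ℕ∞)) atTop (𝓝 L) :=
    tendsto_atTop_ciInf hfanti hbdd
  -- increments
  set d : ℕ → ℝ := fun n => f (n : ℕ∞) - f ((n + 1 : ℕ) : ℕ∞) with hd
  have hd0 : ∀ n, 0 ≤ d n := fun n =>
    sub_nonneg.2 (hfa (by exact_mod_cast Nat.le_succ n))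
  -- tail sums
  have htail : ∀ m : ℕ, HasSum (fun n => if m ≤ n then d n else 0) (f (m : ℕ∞) - L) := by
    intro m
    rw [hasSum_iff_tendsto_nat_of_nonneg (fun n => by split_ifs; exacts [hd0 n, le_rfl])]
    have hps : ∀ N : ℕ, ∑ n ∈ Finset.range N, (if m ≤ n then d n else 0)
        = f (m : ℕ∞) - f ((max m N : ℕ) : ℕ∞) := by
      intro N
      induction N with
      | zero => simp
      | succ N ih =>
          rw [Finset.sum_range_succ, ih]
          by_cases hmN : m ≤ N
          · rw [if_pos hmN, show max m N = N by omega, show max m (N+1) = N + 1 by omega]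
            simp only [hd]
            ring
          · rw [if_neg hmN, show max m N = m by omega, show max m (N+1) = m by omega]
            ring
    rw [tendsto_congr hps]
    have hmax : Tendsto (fun N : ℕ => max m N) atTop atTop :=
      tendsto_atTop_mono (fun N => le_max_right m N) tendsto_id
    exact (hftend.comp hmax).const_sub _
  have hdsum : HasSum d (f ((0 : ℕ) : ℕ∞) - L) := by
    have := htail 0
    simpa using this
  -- the tail function t
  set t : ℕ∞ → ℝ := fun k => ∑' n : ℕ, (if k ≤ (n : ℕ∞) then d n else 0) with ht
  have ht_coe : ∀ m : ℕ, t (m : ℕ∞) = f (m : ℕ∞) - L := by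
    intro m
    have heq : t (m : ℕ∞) = ∑' n : ℕ, (if m ≤ n then d n else 0) := by
      refine tsum_congr fun n => ?_
      by_cases hmn : m ≤ n
      · rw [if_pos (by exact_mod_cast hmn), if_pos hmn]
      · rw [if_neg (by exact_mod_cast hmn), if_neg hmn]
    rw [heq, (htail m).tsum_eq]
  have ht_top : t ⊤ = 0 := by
    rw [ht]
    simp only []
    rw [show (fun n : ℕ => if (⊤ : ℕ∞) ≤ (n : ℕ∞) then d n else 0) = fun _ => (0:ℝ) from
      funext fun n => if_neg (by simp)]
    exact tsum_zero
  have ht_nonneg : ∀ k, 0 ≤ t k := fun k =>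
    tsum_nonneg fun n => by split_ifs; exacts [hd0 n, le_rfl]
  have ht_le_one : ∀ k, t k ≤ 1 := by
    intro k
    induction k using ENat.recTopCoe with
    | top => rw [ht_top]; norm_num
    | coe m =>
        rw [ht_coe m]
        have := hfle1 (m : ℕ∞)
        linarith [hLf, hft]
  -- representation of f
  have hχ : ∀ k : ℕ∞, f k = f ⊤ + (L - f ⊤) * (if k = ⊤ then (0:ℝ) else 1) + t k := by
    intro k
    induction k using ENat.recTopCoe with
    | top => rw [ht_top, if_pos rfl]; ring
    | coe m => rw [ht_coe m, if_neg (by exact_mod_cast WithTop.coe_ne_top)]; ring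
  -- decomposition of ∑' w k * f k for a distribution w
  have decomp : ∀ w : ℕ∞ → ℝ, (∀ k, 0 ≤ w k) → HasSum w 1 →
      (∑' k, w k * f k = f ⊤ + (L - f ⊤) * (1 - w ⊤)
          + ∑' n : ℕ, d n * (∑' k : ℕ∞, if k ≤ (n : ℕ∞) then w k else 0))
        ∧ Summable (fun n : ℕ => d n * (∑' k : ℕ∞, if k ≤ (n : ℕ∞) then w k else 0)) := by
    intro w hw0 hw1
    -- summabilities
    have hs1 : Summable fun k => w k * f ⊤ := hw1.summable.mul_right _
    have hχs : Summable fun k : ℕ∞ => w k * (if k = ⊤ then (0:ℝ) else 1) := by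
      refine Summable.of_nonneg_of_le
        (fun k => mul_nonneg (hw0 k) (by split <;> norm_num)) (fun k => ?_) hw1.summable
      split <;> simp [hw0 k]
    have hs2 : Summable fun k : ℕ∞ => (L - f ⊤) * (w k * (if k = ⊤ then (0:ℝ) else 1)) :=
      hχs.mul_left _
    have hs3 : Summable fun k => w k * t k := by
      refine Summable.of_nonneg_of_le (fun k => mul_nonneg (hw0 k) (ht_nonneg k))
        (fun k => ?_) hw1.summable
      exact mul_le_of_le_one_right (hw0 k) (ht_le_one k)
    -- Fubini for the t-part
    set F : ℕ∞ × ℕ → ℝ := fun p => w p.1 * (if p.1 ≤ (p.2 : ℕ∞) then d p.2 else 0) with hF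
    have hFnn : 0 ≤ F := fun p => by
      simp only [hF]
      exact mul_nonneg (hw0 p.1) (by split_ifs; exacts [hd0 p.2, le_rfl])
    have hFrow : ∀ k : ℕ∞, Summable fun n : ℕ => F (k, n) := by
      intro k
      refine Summable.of_nonneg_of_le (fun n => hFnn (k, n)) (fun n => ?_)
        (hdsum.summable.mul_left (w k))
      simp only [hF]
      rcases le_or_gt k (n : ℕ∞) with hkn | hkn
      · rw [if_pos hkn]
      · rw [if_neg (not_le.2 hkn), mul_zero]
        exact mul_nonneg (hw0 k) (hd0 n)
    have hFrowsum : Summable fun k : ℕ∞ => ∑' n : ℕ, F (k, n) := by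
      refine hs3.congr fun k => ?_
      simp only [hF, ht]
      rw [tsum_mul_left]
    have hFsummable : Summable F :=
      (summable_prod_of_nonneg hFnn).2 ⟨hFrow, hFrowsum⟩
    have hcomm : ∑' k : ℕ∞, ∑' n : ℕ, F (k, n) = ∑' n : ℕ, ∑' k : ℕ∞, F (k, n) :=
      (Summable.tsum_comm (f := fun (k : ℕ∞) (n : ℕ) => F (k, n)) hFsummable).symm
    have hinner : ∀ n : ℕ, ∑' k : ℕ∞, F (k, n)
        = d n * (∑' k : ℕ∞, if k ≤ (n : ℕ∞) then w k else 0) := by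
      intro n
      rw [← tsum_mul_left]
      refine tsum_congr fun k => ?_
      simp only [hF]
      split <;> ring
    have htpart : ∑' k, w k * t k
        = ∑' n : ℕ, d n * (∑' k : ℕ∞, if k ≤ (n : ℕ∞) then w k else 0) := by
      calc ∑' k, w k * t k = ∑' k : ℕ∞, ∑' n : ℕ, F (k, n) := by
            refine tsum_congr fun k => ?_
            simp only [hF, ht]
            rw [tsum_mul_left]
        _ = ∑' n : ℕ, ∑' k : ℕ∞, F (k, n) := hcomm
        _ = _ := tsum_congr hinner
    have htpartsum : Summable (fun n : ℕ => d n * (∑' k : ℕ∞, if k ≤ (n : ℕ∞) then w k else 0)) := by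
      refine (hFsummable.prod_symm.prod).congr fun n => ?_
      exact hinner n
    refine ⟨?_, htpartsum⟩
    -- χ-part
    have hχval : ∑' k : ℕ∞, w k * (if k = ⊤ then (0:ℝ) else 1) = 1 - w ⊤ := by
      have heq : (fun k : ℕ∞ => w k * (if k = ⊤ then (0:ℝ) else 1))
          = fun k : ℕ∞ => w k - (if k = ⊤ then w k else 0) := by
        funext k
        split <;> simp
      rw [heq, Summable.tsum_sub hw1.summable summable_ite_top, hw1.tsum_eq, tsum_ite_top w]
    -- put it together
    calc ∑' k, w k * f k
        = ∑' k : ℕ∞, (w k * f ⊤ + (L - f ⊤) * (w k * (if k = ⊤ then (0:ℝ) else 1))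
            + w k * t k) := by
          refine tsum_congr fun k => ?_
          rw [hχ k]
          ring
      _ = (∑' k : ℕ∞, w k * f ⊤) + (∑' k : ℕ∞, (L - f ⊤) * (w k * (if k = ⊤ then (0:ℝ) else 1)))
            + ∑' k, w k * t k := by
          rw [Summable.tsum_add (hs1.add hs2) hs3, Summable.tsum_add hs1 hs2]
      _ = f ⊤ + (L - f ⊤) * (1 - w ⊤)
            + ∑' n : ℕ, d n * (∑' k : ℕ∞, if k ≤ (n : ℕ∞) then w k else 0) := by
          rw [tsum_mul_right, hw1.tsum_eq, tsum_mul_left, hχval, htpart, one_mul]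
  obtain ⟨hμeq, hμsum⟩ := decomp μ hμ0 hμ1
  obtain ⟨hνeq, hνsum⟩ := decomp ν hν0 hν1
  rw [hμeq, hνeq]
  -- compare the ⊤ masses : 1 - ν ⊤ ≤ 1 - μ ⊤
  have hcoesum : ∀ (w : ℕ∞ → ℝ), HasSum w 1 → Summable (fun n : ℕ => w (n : ℕ∞)) :=
    fun w hw => hw.summable.comp_injective Nat.cast_injective
  have hwnat : ∀ (w : ℕ∞ → ℝ), HasSum w 1 → ∑' n : ℕ, w (n : ℕ∞) = 1 - w ⊤ := by
    intro w hw
    have := tsum_enat_split (hcoesum w hw)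
    rw [hw.tsum_eq] at this
    linarith
  have hsummand : ∀ (w : ℕ∞ → ℝ), (∀ k, 0 ≤ w k) → HasSum w 1 → ∀ x : ℕ∞,
      Summable (fun k : ℕ∞ => if k ≤ x then w k else 0) := by
    intro w hw0 hw1 x
    refine Summable.of_nonneg_of_le
      (fun k => by split_ifs; exacts [hw0 k, le_rfl])
      (fun k => by split_ifs; exacts [le_rfl, hw0 k]) hw1.summable
  have hcdf_le : ∀ N : ℕ, (∑' k : ℕ∞, if k ≤ (N : ℕ∞) then μ k else 0)
      ≤ ∑' n : ℕ, μ (n : ℕ∞) := by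
    intro N
    rw [← tsum_enat_ite (hcoesum μ hμ1)]
    refine Summable.tsum_le_tsum (fun k => ?_) (hsummand μ hμ0 hμ1 _)
      (summable_enat_ite (hcoesum μ hμ1))
    split_ifs with h1 h2
    · exact absurd (h2 ▸ h1) (by simp)
    · exact le_rfl
    · exact le_rfl
    · exact hμ0 k
  have hsumrange : ∀ N : ℕ, ∑ n ∈ Finset.range N, ν (n : ℕ∞) ≤ ∑' n : ℕ, μ (n : ℕ∞) := by
    intro N
    have hstep1 : ∑ n ∈ Finset.range N, ν (n : ℕ∞)
        ≤ ∑' k : ℕ∞, if k ≤ (N : ℕ∞) then ν k else 0 := by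
      have himg : ∑ n ∈ Finset.range N, ν (n : ℕ∞)
          = ∑ k ∈ (Finset.range N).image ((↑) : ℕ → ℕ∞),
              (if k ≤ (N : ℕ∞) then ν k else 0) := by
        rw [Finset.sum_image (fun a _ b _ hab => Nat.cast_injective hab)]
        refine Finset.sum_congr rfl fun n hn => ?_
        rw [Finset.mem_range] at hn
        rw [if_pos (by exact_mod_cast hn.le)]
      rw [himg]
      exact Summable.sum_le_tsum _ (fun k _ => by split_ifs; exacts [hν0 k, le_rfl])
        (hsummand ν hν0 hν1 _)
    exact le_trans hstep1 (le_trans (h (N : ℕ∞)) (hcdf_le N))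
  have hnatmass : ∑' n : ℕ, ν (n : ℕ∞) ≤ ∑' n : ℕ, μ (n : ℕ∞) :=
    Real.tsum_le_of_sum_range_le (fun n => hν0 _) hsumrange
  have htopmass : 1 - ν ⊤ ≤ 1 - μ ⊤ := by
    rw [← hwnat μ hμ1, ← hwnat ν hν1]
    exact hnatmass
  refine add_le_add (add_le_add le_rfl ?_) ?_
  · exact mul_le_mul_of_nonneg_left htopmass (by linarith)
  · exact Summable.tsum_le_tsum (fun n => mul_le_mul_of_nonneg_left (h (n : ℕ∞)) (hd0 n)) hνsum hμsum

end Part4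

section Part5

variable {μ ν : ℕ∞ → ℝ}

lemma conv_nonneg' (hμ0 : ∀ k, 0 ≤ μ k) (hν0 : ∀ k, 0 ≤ ν k) (k : ℕ∞) :
    0 ≤ conv μ ν k :=
  tsum_nonneg fun p => by split_ifs; exacts [mul_nonneg (hμ0 _) (hν0 _), le_rfl]

lemma summable_prodF (hμ0 : ∀ k, 0 ≤ μ k) (hν0 : ∀ k, 0 ≤ ν k)
    (hμ1 : HasSum μ 1) (hν1 : HasSum ν 1) :
    Summable (fun p : ℕ∞ × ℕ∞ => μ p.1 * ν p.2) := by
  refine (summable_prod_of_nonneg (fun p => mul_nonneg (hμ0 _) (hν0 _))).2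
    ⟨fun a => hν1.summable.mul_left (μ a), ?_⟩
  refine hμ1.summable.congr fun a => ?_
  have : ∑' y : ℕ∞, μ (a, y).1 * ν (a, y).2 = ∑' y : ℕ∞, μ a * ν y :=
    tsum_congr fun y => rfl
  rw [this, tsum_mul_left, hν1.tsum_eq, mul_one]

lemma hasSum_prodF (hμ0 : ∀ k, 0 ≤ μ k) (hν0 : ∀ k, 0 ≤ ν k)
    (hμ1 : HasSum μ 1) (hν1 : HasSum ν 1) :
    HasSum (fun p : ℕ∞ × ℕ∞ => μ p.1 * ν p.2) 1 := by
  have hs := summable_prodF hμ0 hν0 hμ1 hν1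
  refine hs.hasSum_iff.2 ?_
  rw [Summable.tsum_prod hs]
  calc ∑' (a : ℕ∞) (b : ℕ∞), μ (a, b).1 * ν (a, b).2 = ∑' a : ℕ∞, μ a := by
        refine tsum_congr fun a => ?_
        have : ∑' y : ℕ∞, μ (a, y).1 * ν (a, y).2 = ∑' y : ℕ∞, μ a * ν y :=
          tsum_congr fun y => rfl
        rw [this, tsum_mul_left, hν1.tsum_eq, mul_one]
    _ = 1 := hμ1.tsum_eq

lemma conv_eq_fiber (k : ℕ∞) :
    conv μ ν k = ∑' p : ((fun p : ℕ∞ × ℕ∞ => p.1 + p.2) ⁻¹' {k}),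
      μ (p : ℕ∞ × ℕ∞).1 * ν (p : ℕ∞ × ℕ∞).2 := by
  classical
  unfold conv
  rw [tsum_subtype ((fun p : ℕ∞ × ℕ∞ => p.1 + p.2) ⁻¹' {k})
    (fun p : ℕ∞ × ℕ∞ => μ p.1 * ν p.2)]
  refine tsum_congr fun p => ?_
  rw [Set.indicator_apply]
  by_cases hp : p.1 + p.2 = k
  · rw [if_pos hp, if_pos (by simpa using hp)]
  · rw [if_neg hp, if_neg (by simpa using hp)]

lemma hasSum_conv (hμ0 : ∀ k, 0 ≤ μ k) (hν0 : ∀ k, 0 ≤ ν k)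
    (hμ1 : HasSum μ 1) (hν1 : HasSum ν 1) : HasSum (conv μ ν) 1 := by
  have h := (hasSum_prodF hμ0 hν0 hμ1 hν1).tsum_fiberwise (fun p => p.1 + p.2)
  have heq : conv μ ν = fun k => ∑' p : ((fun p : ℕ∞ × ℕ∞ => p.1 + p.2) ⁻¹' {k}),
      μ (p : ℕ∞ × ℕ∞).1 * ν (p : ℕ∞ × ℕ∞).2 := funext conv_eq_fiber
  rw [heq]
  exact h

lemma conv_zero (hμz : μ 0 = 0) : conv μ ν 0 = 0 := by
  unfold conv
  rw [show (fun p : ℕ∞ × ℕ∞ => if p.1 + p.2 = 0 then μ p.1 * ν p.2 else 0)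
      = fun _ => (0 : ℝ) from funext fun p => ?_, tsum_zero]
  split_ifs with hp
  · have h1 : p.1 = 0 := by
      have h2 := hp ▸ (le_self_add : p.1 ≤ p.1 + p.2)
      simpa using h2
    rw [h1, hμz, zero_mul]
  · rfl

noncomputable def wfun (ν : ℕ∞ → ℝ) (x a : ℕ∞) : ℝ :=
  ∑' b : ℕ∞, if a + b ≤ x then ν b else 0

lemma wfun_nonneg (hν0 : ∀ k, 0 ≤ ν k) (x a : ℕ∞) : 0 ≤ wfun ν x a :=
  tsum_nonneg fun b => by split_ifs; exacts [hν0 b, le_rfl]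

lemma wfun_summand_summable (hν0 : ∀ k, 0 ≤ ν k) (hν1 : HasSum ν 1) (x a : ℕ∞) :
    Summable (fun b : ℕ∞ => if a + b ≤ x then ν b else 0) :=
  Summable.of_nonneg_of_le
    (fun b => by
      show (0:ℝ) ≤ if a + b ≤ x then ν b else 0
      split_ifs
      exacts [hν0 b, le_rfl])
    (fun b => by
      show (if a + b ≤ x then ν b else 0) ≤ ν b
      split_ifs
      exacts [le_rfl, hν0 b]) hν1.summable

lemma wfun_le_one (hν0 : ∀ k, 0 ≤ ν k) (hν1 : HasSum ν 1) (x a : ℕ∞) :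
    wfun ν x a ≤ 1 := by
  have := Summable.tsum_le_tsum (f := fun b : ℕ∞ => if a + b ≤ x then ν b else 0) (g := ν)
    (fun b => by
      show (if a + b ≤ x then ν b else 0) ≤ ν b
      split_ifs
      exacts [le_rfl, hν0 b])
    (wfun_summand_summable hν0 hν1 x a) hν1.summable
  rw [hν1.tsum_eq] at this
  exact this

lemma wfun_anti (hν0 : ∀ k, 0 ≤ ν k) (hν1 : HasSum ν 1) (x : ℕ∞) :
    Antitone (wfun ν x) := by
  intro a a' haa'
  refine Summable.tsum_le_tsum (fun b => ?_) (wfun_summand_summable hν0 hν1 x a')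
    (wfun_summand_summable hν0 hν1 x a)
  split_ifs with h1 h2
  · exact le_rfl
  · exact absurd (le_trans (add_le_add_left haa' b) h1) h2
  · exact hν0 b
  · exact le_rfl

lemma wfun_mono (hμ0 : ∀ k, 0 ≤ μ k) (hν0 : ∀ k, 0 ≤ ν k)
    (hμ1 : HasSum μ 1) (hν1 : HasSum ν 1) (h : StDom μ ν) (x a : ℕ∞) :
    wfun ν x a ≤ wfun μ x a := by
  unfold wfun
  induction x using ENat.recTopCoe with
  | top =>
      have hμ' : ∑' b : ℕ∞, (if a + b ≤ (⊤ : ℕ∞) then μ b else 0) = 1 := by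
        rw [tsum_congr fun b => if_pos le_top]
        exact hμ1.tsum_eq
      have hν' : ∑' b : ℕ∞, (if a + b ≤ (⊤ : ℕ∞) then ν b else 0) = 1 := by
        rw [tsum_congr fun b => if_pos le_top]
        exact hν1.tsum_eq
      rw [hμ', hν']
  | coe X =>
      by_cases hax : a ≤ (X : ℕ∞)
      · obtain ⟨A, rfl⟩ := enat_ne_top_cases a (by
          rintro rfl
          simp at hax)
        have hAX : A ≤ X := by exact_mod_cast hax
        have hcond : ∀ b : ℕ∞, ((A : ℕ∞) + b ≤ (X : ℕ∞)) ↔ b ≤ ((X - A : ℕ) : ℕ∞) := by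
          intro b
          induction b using ENat.recTopCoe with
          | top =>
              constructor
              · intro hb
                exact absurd hb (by simp)
              · intro hb
                exact absurd hb (by simp)
          | coe B =>
              constructor
              · intro hb
                have : A + B ≤ X := by exact_mod_cast hb
                exact_mod_cast by omega
              · intro hb
                have : B ≤ X - A := by exact_mod_cast hb
                exact_mod_cast by omega
        have hμ' : ∀ b : ℕ∞, (if (A : ℕ∞) + b ≤ (X : ℕ∞) then μ b else 0)
            = (if b ≤ ((X - A : ℕ) : ℕ∞) then μ b else 0) := fun b => by
          by_cases hb : (A : ℕ∞) + b ≤ (X : ℕ∞)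
          · rw [if_pos hb, if_pos ((hcond b).1 hb)]
          · rw [if_neg hb, if_neg (fun hb' => hb ((hcond b).2 hb'))]
        have hν' : ∀ b : ℕ∞, (if (A : ℕ∞) + b ≤ (X : ℕ∞) then ν b else 0)
            = (if b ≤ ((X - A : ℕ) : ℕ∞) then ν b else 0) := fun b => by
          by_cases hb : (A : ℕ∞) + b ≤ (X : ℕ∞)
          · rw [if_pos hb, if_pos ((hcond b).1 hb)]
          · rw [if_neg hb, if_neg (fun hb' => hb ((hcond b).2 hb'))]
        rw [tsum_congr hμ', tsum_congr hν']
        exact h ((X - A : ℕ) : ℕ∞)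
      · have hz : ∀ (w : ℕ∞ → ℝ) (b : ℕ∞),
            (if a + b ≤ (X : ℕ∞) then w b else 0) = 0 := by
          intro w b
          rw [if_neg]
          intro hab
          exact hax (le_trans le_self_add hab)
        rw [tsum_congr (hz ν), tsum_congr (hz μ), tsum_zero]

lemma cdf_conv (hμ0 : ∀ k, 0 ≤ μ k) (hν0 : ∀ k, 0 ≤ ν k)
    (hμ1 : HasSum μ 1) (hν1 : HasSum ν 1) (x : ℕ∞) :
    ∑' k : ℕ∞, (if k ≤ x then conv μ ν k else 0) = ∑' a : ℕ∞, μ a * wfun ν x a := by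
  set Fx : ℕ∞ × ℕ∞ → ℝ := fun p => if p.1 + p.2 ≤ x then μ p.1 * ν p.2 else 0 with hFx
  have hFxs : Summable Fx := by
    have h1 : ∀ p : ℕ∞ × ℕ∞, 0 ≤ Fx p := by
      intro p
      simp only [hFx]
      split_ifs
      · exact mul_nonneg (hμ0 _) (hν0 _)
      · exact le_rfl
    have h2 : ∀ p : ℕ∞ × ℕ∞, Fx p ≤ μ p.1 * ν p.2 := by
      intro p
      simp only [hFx]
      split_ifs
      · exact le_rfl
      · exact mul_nonneg (hμ0 _) (hν0 _)
    exact Summable.of_nonneg_of_le h1 h2 (summable_prodF hμ0 hν0 hμ1 hν1)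
  have step1 : (fun k : ℕ∞ => if k ≤ x then conv μ ν k else 0)
      = fun k => ∑' p : ((fun p : ℕ∞ × ℕ∞ => p.1 + p.2) ⁻¹' {k}), Fx p := by
    funext k
    by_cases hk : k ≤ x
    · rw [if_pos hk, conv_eq_fiber]
      refine tsum_congr fun p => ?_
      have hp : (p : ℕ∞ × ℕ∞).1 + (p : ℕ∞ × ℕ∞).2 = k := p.2
      simp only [hFx]
      rw [if_pos (by rw [hp]; exact hk)]
    · rw [if_neg hk]
      symm
      rw [show (fun p : ((fun p : ℕ∞ × ℕ∞ => p.1 + p.2) ⁻¹' {k}) => Fx p)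
          = fun _ => (0:ℝ) from funext fun p => ?_, tsum_zero]
      have hp : (p : ℕ∞ × ℕ∞).1 + (p : ℕ∞ × ℕ∞).2 = k := p.2
      simp only [hFx]
      rw [if_neg (by rw [hp]; exact hk)]
  rw [step1, (hFxs.hasSum.tsum_fiberwise (fun p => p.1 + p.2)).tsum_eq, Summable.tsum_prod hFxs]
  refine tsum_congr fun a => ?_
  unfold wfun
  rw [← tsum_mul_left]
  refine tsum_congr fun b => ?_
  simp only [hFx]
  split_ifs <;> ring

lemma conv_stdom (hμ0 : ∀ k, 0 ≤ μ k) (hν0 : ∀ k, 0 ≤ ν k)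
    (hμ1 : HasSum μ 1) (hν1 : HasSum ν 1) (h : StDom μ ν) :
    StDom (conv μ μ) (conv ν ν) := by
  intro x
  rw [cdf_conv hμ0 hμ0 hμ1 hμ1 x, cdf_conv hν0 hν0 hν1 hν1 x]
  have step1 : ∑' a : ℕ∞, ν a * wfun ν x a ≤ ∑' a : ℕ∞, ν a * wfun μ x a := by
    refine Summable.tsum_le_tsum
      (fun a => mul_le_mul_of_nonneg_left (wfun_mono hμ0 hν0 hμ1 hν1 h x a) (hν0 a)) ?_ ?_
    · exact Summable.of_nonneg_of_le
        (fun a => mul_nonneg (hν0 a) (wfun_nonneg hν0 x a))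
        (fun a => mul_le_of_le_one_right (hν0 a) (wfun_le_one hν0 hν1 x a)) hν1.summable
    · exact Summable.of_nonneg_of_le
        (fun a => mul_nonneg (hν0 a) (wfun_nonneg hμ0 x a))
        (fun a => mul_le_of_le_one_right (hν0 a) (wfun_le_one hμ0 hμ1 x a)) hν1.summable
  refine le_trans step1 ?_
  exact key_mono hμ0 hν0 hμ1 hν1 h (wfun_anti hμ0 hμ1 x)
    (wfun_nonneg hμ0 x ⊤) (wfun_le_one hμ0 hμ1 x 0)

end Part5

section Part6

variable {c : ℝ}

lemma kf_one (hc : 0 < c) : kingmanFactor c 1 = 0 := by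
  unfold kingmanFactor
  norm_num

lemma pk_zero (hc : 0 < c) (j : ℕ∞) (hj : j ≠ 0) : pK c j 0 = 0 := by
  induction j using ENat.recTopCoe with
  | top =>
      unfold pK
      rw [if_pos rfl]
      have htp : ∏' l : ℕ, kingmanFactor c (0 + 1 + l) = 0 := by
        refine le_antisymm ?_ ?_
        · have h := tprod_le_prod_of_le_one (f := fun l : ℕ => kingmanFactor c (0 + 1 + l))
            (fun l => kf_nonneg hc _) (fun l => kf_le_one hc _) {0}
          rw [Finset.prod_singleton] at h
          refine le_trans h (le_of_eq ?_)
          rw [show 0 + 1 + 0 = 1 from rfl]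
          exact kf_one hc
        · exact tprod_nonneg_of_le_one (fun l => kf_nonneg hc _) (fun l => kf_le_one hc _)
      rw [htp, mul_zero]
  | coe J =>
      have hJ : 1 ≤ J := by
        rcases Nat.eq_zero_or_pos J with rfl | h
        · exact absurd (by norm_num) hj
        · exact h
      rw [pk_coe]
      rw [Finset.prod_eq_zero (Finset.mem_Icc.2 ⟨le_rfl, by omega⟩) (kf_one hc), mul_zero]

lemma pk_zero_zero (hc : 0 < c) : pK c ((0 : ℕ) : ℕ∞) 0 = 1 := by
  rw [pk_coe, Finset.Icc_eq_empty (by omega)]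
  norm_num [div_self hc.ne']

/-- The inner finite sums of `pK` are at most 1. -/
lemma sum_pk_ite_le_one (hc : 0 < c) (u : Finset ℕ) (j : ℕ∞) :
    ∑ n ∈ u, (if (n : ℕ∞) ≤ j then pK c j n else 0) ≤ 1 := by
  classical
  have claim' : ∀ (J : ℕ) (u : Finset ℕ),
      ∑ n ∈ u, (if (n : ℕ∞) ≤ (J : ℕ∞) then pK c (J : ℕ∞) n else 0) ≤ 1 := by
    intro J u
    have hnn : ∀ n : ℕ, 0 ≤ (if (n : ℕ∞) ≤ (J : ℕ∞) then pK c (J : ℕ∞) n else 0) := by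
      intro n
      split_ifs
      exacts [pk_nonneg hc _ _, le_rfl]
    have h1 : ∑ n ∈ u, (if (n : ℕ∞) ≤ (J : ℕ∞) then pK c (J : ℕ∞) n else 0)
        ≤ ∑ n ∈ u ∪ Finset.Icc 0 J, (if (n : ℕ∞) ≤ (J : ℕ∞) then pK c (J : ℕ∞) n else 0) :=
      Finset.sum_le_sum_of_subset_of_nonneg Finset.subset_union_left fun n _ _ => hnn n
    have h2 : ∑ n ∈ u ∪ Finset.Icc 0 J, (if (n : ℕ∞) ≤ (J : ℕ∞) then pK c (J : ℕ∞) n else 0)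
        = ∑ n ∈ Finset.Icc 0 J, (if (n : ℕ∞) ≤ (J : ℕ∞) then pK c (J : ℕ∞) n else 0) := by
      symm
      refine Finset.sum_subset Finset.subset_union_right fun n _ hn => ?_
      rw [Finset.mem_Icc] at hn
      rw [if_neg]
      intro hcon
      exact hn ⟨Nat.zero_le n, by exact_mod_cast hcon⟩
    have h3 : ∑ n ∈ Finset.Icc 0 J, (if (n : ℕ∞) ≤ (J : ℕ∞) then pK c (J : ℕ∞) n else 0)
        = ∑ n ∈ Finset.Icc 0 J, pK c (J : ℕ∞) n := by
      refine Finset.sum_congr rfl fun n hn => ?_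
      rw [Finset.mem_Icc] at hn
      rw [if_pos (by exact_mod_cast hn.2)]
    have h4 : Finset.Icc 0 J = insert 0 (Finset.Icc 1 J) := by
      ext a
      simp only [Finset.mem_Icc, Finset.mem_insert]
      omega
    rcases Nat.eq_zero_or_pos J with rfl | hJ
    · refine le_trans h1 (le_trans (le_of_eq h2) (le_of_eq ?_))
      rw [h3, h4, Finset.Icc_eq_empty (by omega),
        show (insert 0 (∅ : Finset ℕ)) = {0} from rfl, Finset.sum_singleton]
      exact pk_zero_zero hc
    · refine le_trans h1 (le_trans (le_of_eq h2) (le_of_eq ?_))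
      rw [h3, h4, Finset.sum_insert (by simp),
        pk_zero hc _ (Nat.cast_ne_zero.2 (by omega)),
        zero_add, sum_pk_eq_one hc hJ]
  induction j using ENat.recTopCoe with
  | top =>
      set M : ℕ := u.sup id with hM
      calc ∑ n ∈ u, (if (n : ℕ∞) ≤ (⊤ : ℕ∞) then pK c ⊤ n else 0)
          ≤ ∑ n ∈ u, (if (n : ℕ∞) ≤ (M : ℕ∞) then pK c (M : ℕ∞) n else 0) := by
            refine Finset.sum_le_sum fun n hn => ?_
            rw [if_pos le_top, if_pos (by exact_mod_cast Finset.le_sup (f := id) hn)]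
            exact pk_top_le hc n M
        _ ≤ 1 := claim' M u
  | coe J => exact claim' J u

variable {μ : ℕ∞ → ℝ}

lemma FcFin_nonneg (hc : 0 < c) (hμ0 : ∀ k, 0 ≤ μ k) (hμz : μ 0 = 0)
    (hμ1 : HasSum μ 1) (n : ℕ) : 0 ≤ FcFin c μ n := by
  refine tsum_nonneg fun j => ?_
  split_ifs
  · exact mul_nonneg (conv_nonneg' hμ0 hμ0 j) (pk_nonneg hc _ _)
  · exact le_rfl

lemma FcFin_summand_summable (hc : 0 < c) (hμ0 : ∀ k, 0 ≤ μ k)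
    (hμ1 : HasSum μ 1) (n : ℕ) :
    Summable (fun j : ℕ∞ => if (n : ℕ∞) ≤ j then conv μ μ j * pK c j n else 0) := by
  refine Summable.of_nonneg_of_le
    (fun j => by
      show (0:ℝ) ≤ if (n : ℕ∞) ≤ j then conv μ μ j * pK c j n else 0
      split_ifs
      exacts [mul_nonneg (conv_nonneg' hμ0 hμ0 j) (pk_nonneg hc _ _), le_rfl])
    (fun j => by
      show (if (n : ℕ∞) ≤ j then conv μ μ j * pK c j n else 0) ≤ conv μ μ j
      split_ifs
      · exact mul_le_of_le_one_right (conv_nonneg' hμ0 hμ0 j) (pk_le_one hc _ _)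
      · exact conv_nonneg' hμ0 hμ0 j)
    (hasSum_conv hμ0 hμ0 hμ1 hμ1).summable

lemma FcFin_zero (hc : 0 < c) (hμ0 : ∀ k, 0 ≤ μ k) (hμz : μ 0 = 0) :
    FcFin c μ 0 = 0 := by
  unfold FcFin
  rw [show (fun j : ℕ∞ => if ((0:ℕ) : ℕ∞) ≤ j then conv μ μ j * pK c j 0 else 0)
      = fun _ => (0:ℝ) from funext fun j => ?_, tsum_zero]
  rw [if_pos (by exact_mod_cast (zero_le : (0:ℕ∞) ≤ j))]
  by_cases hj : j = 0
  · rw [hj, conv_zero hμz, zero_mul]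
  · rw [pk_zero hc j hj, mul_zero]

lemma sum_FcFin_le_one (hc : 0 < c) (hμ0 : ∀ k, 0 ≤ μ k)
    (hμ1 : HasSum μ 1) (u : Finset ℕ) : ∑ n ∈ u, FcFin c μ n ≤ 1 := by
  classical
  have hswap : ∑ n ∈ u, FcFin c μ n
      = ∑' j : ℕ∞, ∑ n ∈ u, (if (n : ℕ∞) ≤ j then conv μ μ j * pK c j n else 0) := by
    unfold FcFin
    exact (Summable.tsum_finsetSum fun n _ => FcFin_summand_summable hc hμ0 hμ1 n).symm
  rw [hswap]
  have hC1 := hasSum_conv hμ0 hμ0 hμ1 hμ1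
  have hterm : ∀ j : ℕ∞, ∑ n ∈ u, (if (n : ℕ∞) ≤ j then conv μ μ j * pK c j n else 0)
      ≤ conv μ μ j := by
    intro j
    have heq : ∑ n ∈ u, (if (n : ℕ∞) ≤ j then conv μ μ j * pK c j n else 0)
        = conv μ μ j * ∑ n ∈ u, (if (n : ℕ∞) ≤ j then pK c j n else 0) := by
      rw [Finset.mul_sum]
      refine Finset.sum_congr rfl fun n _ => ?_
      split_ifs <;> ring
    rw [heq]
    exact mul_le_of_le_one_right (conv_nonneg' hμ0 hμ0 j) (sum_pk_ite_le_one hc u j)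
  have hsummable : Summable (fun j : ℕ∞ =>
      ∑ n ∈ u, (if (n : ℕ∞) ≤ j then conv μ μ j * pK c j n else 0)) :=
    summable_sum fun n _ => FcFin_summand_summable hc hμ0 hμ1 n
  calc ∑' j : ℕ∞, ∑ n ∈ u, (if (n : ℕ∞) ≤ j then conv μ μ j * pK c j n else 0)
      ≤ ∑' j : ℕ∞, conv μ μ j := Summable.tsum_le_tsum hterm hsummable hC1.summable
    _ = 1 := hC1.tsum_eq

lemma summable_FcFin (hc : 0 < c) (hμ0 : ∀ k, 0 ≤ μ k) (hμz : μ 0 = 0)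
    (hμ1 : HasSum μ 1) : Summable (fun n : ℕ => FcFin c μ n) :=
  summable_of_sum_le (fun n => FcFin_nonneg hc hμ0 hμz hμ1 n)
    (sum_FcFin_le_one hc hμ0 hμ1)

lemma Fc_coe_eq (hc : 0 < c) (hμ0 : ∀ k, 0 ≤ μ k) (hμz : μ 0 = 0) (n : ℕ) :
    Fc c μ (n : ℕ∞) = FcFin c μ n := by
  unfold Fc
  rw [if_neg (by exact_mod_cast WithTop.coe_ne_top)]
  rcases Nat.eq_zero_or_pos n with rfl | hn
  · rw [if_pos (by norm_num), FcFin_zero hc hμ0 hμz]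
  · rw [if_neg (by exact_mod_cast by omega), ENat.toNat_coe]

lemma Fc_total (hc : 0 < c) (hμ0 : ∀ k, 0 ≤ μ k) (hμz : μ 0 = 0)
    (hμ1 : HasSum μ 1) : ∑' k : ℕ∞, Fc c μ k = 1 := by
  have hnat : Summable fun n : ℕ => Fc c μ (n : ℕ∞) :=
    (summable_FcFin hc hμ0 hμz hμ1).congr fun n => (Fc_coe_eq hc hμ0 hμz n).symm
  rw [tsum_enat_split hnat]
  have h1 : ∑' n : ℕ, Fc c μ (n : ℕ∞) = ∑' n : ℕ, FcFin c μ n :=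
    tsum_congr fun n => Fc_coe_eq hc hμ0 hμz n
  have h2 : Fc c μ ⊤ = 1 - ∑' n : ℕ, FcFin c μ n := by
    unfold Fc
    rw [if_pos rfl]
  rw [h1, h2]
  ring

lemma Fc_cdf_coe (hc : 0 < c) (hμ0 : ∀ k, 0 ≤ μ k) (hμz : μ 0 = 0)
    (hμ1 : HasSum μ 1) {m : ℕ} (hm : 1 ≤ m) :
    ∑' k : ℕ∞, (if k ≤ (m : ℕ∞) then Fc c μ k else 0)
      = ∑' j : ℕ∞, conv μ μ j * gfun c m j := by
  classical
  -- step 1 : the CDF is the finite sum of FcFin over Icc 1 m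
  have hstep1 : ∑' k : ℕ∞, (if k ≤ (m : ℕ∞) then Fc c μ k else 0)
      = ∑ n ∈ Finset.Icc 1 m, FcFin c μ n := by
    rw [tsum_eq_sum (s := (Finset.range (m + 1)).image ((↑) : ℕ → ℕ∞))
      (fun k hk => ?_)]
    · rw [Finset.sum_image (fun a _ b _ hab => Nat.cast_injective hab)]
      have hval : ∀ n ∈ Finset.range (m + 1),
          (if (n : ℕ∞) ≤ (m : ℕ∞) then Fc c μ (n : ℕ∞) else 0)
          = if n = 0 then 0 else FcFin c μ n := by
        intro n hn
        rw [Finset.mem_range] at hn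
        rw [if_pos (by exact_mod_cast by omega), Fc_coe_eq hc hμ0 hμz n]
        rcases Nat.eq_zero_or_pos n with rfl | hn0
        · rw [if_pos rfl, FcFin_zero hc hμ0 hμz]
        · rw [if_neg (by omega)]
      rw [Finset.sum_congr rfl hval]
      have hins : Finset.range (m + 1) = insert 0 (Finset.Icc 1 m) := by
        ext a
        simp only [Finset.mem_range, Finset.mem_insert, Finset.mem_Icc]
        omega
      rw [hins, Finset.sum_insert (by simp), if_pos rfl, zero_add]
      refine Finset.sum_congr rfl fun n hn => ?_
      rw [Finset.mem_Icc] at hn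
      rw [if_neg (by omega)]
    · by_cases hkm : k ≤ (m : ℕ∞)
      · exfalso
        obtain ⟨n, rfl⟩ := enat_ne_top_cases k (fun h => by rw [h] at hkm; simp at hkm)
        refine hk (Finset.mem_image.2 ⟨n, Finset.mem_range.2 ?_, rfl⟩)
        have : n ≤ m := by exact_mod_cast hkm
        omega
      · rw [if_neg hkm]
  rw [hstep1]
  -- step 2 : swap the finite sum and the tsum
  have hstep2 : ∑ n ∈ Finset.Icc 1 m, FcFin c μ n
      = ∑' j : ℕ∞, ∑ n ∈ Finset.Icc 1 m,
          (if (n : ℕ∞) ≤ j then conv μ μ j * pK c j n else 0) := by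
    unfold FcFin
    exact (Summable.tsum_finsetSum fun n _ => FcFin_summand_summable hc hμ0 hμ1 n).symm
  rw [hstep2]
  refine tsum_congr fun j => ?_
  by_cases hj : j = 0
  · subst hj
    rw [conv_zero hμz, zero_mul]
    refine Finset.sum_eq_zero fun n hn => ?_
    rw [Finset.mem_Icc] at hn
    rw [if_neg]
    intro hcon
    have hn0 : (n : ℕ∞) = 0 := le_antisymm hcon zero_le
    have : n = 0 := by exact_mod_cast hn0
    omega
  · unfold gfun
    rw [if_neg hj, Finset.mul_sum]
    refine Finset.sum_congr rfl fun n _ => ?_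
    split_ifs <;> ring

end Part6

/-- For every `c > 0`, the map `F_c` is monotone with respect to the
stochastic order: if `μ ⪯ ν` then `F_c(μ) ⪯ F_c(ν)`. -/
theorem Fc_monotone (c : ℝ) (hc : 0 < c) (μ ν : ℕ∞ → ℝ) (hμ : IsDist μ) (hν : IsDist ν)
    (h : StDom μ ν) : StDom (Fc c μ) (Fc c ν) := by
  obtain ⟨hμ0, hμz, hμ1⟩ := hμ
  obtain ⟨hν0, hνz, hν1⟩ := hν
  intro x
  induction x using ENat.recTopCoe with
  | top =>
      have hμt : ∑' k : ℕ∞, (if k ≤ (⊤ : ℕ∞) then Fc c μ k else 0) = 1 := by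
        rw [tsum_congr fun k => if_pos le_top]
        exact Fc_total hc hμ0 hμz hμ1
      have hνt : ∑' k : ℕ∞, (if k ≤ (⊤ : ℕ∞) then Fc c ν k else 0) = 1 := by
        rw [tsum_congr fun k => if_pos le_top]
        exact Fc_total hc hν0 hνz hν1
      rw [hμt, hνt]
  | coe m =>
      rcases Nat.eq_zero_or_pos m with rfl | hm
      · have hzero : ∀ w : ℕ∞ → ℝ,
            ∑' k : ℕ∞, (if k ≤ ((0 : ℕ) : ℕ∞) then Fc c w k else 0) = 0 := by
          intro w
          have hterm : ∀ k : ℕ∞, (if k ≤ ((0 : ℕ) : ℕ∞) then Fc c w k else 0) = 0 := by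
            intro k
            by_cases hk : k ≤ ((0 : ℕ) : ℕ∞)
            · rw [if_pos hk]
              have hk0 : k = 0 := le_antisymm (by simpa using hk) zero_le
              rw [hk0]
              unfold Fc
              rw [if_neg (by simp), if_pos rfl]
            · rw [if_neg hk]
          rw [tsum_congr hterm, tsum_zero]
        rw [hzero μ, hzero ν]
      · rw [Fc_cdf_coe hc hμ0 hμz hμ1 hm, Fc_cdf_coe hc hν0 hνz hν1 hm]
        exact key_mono (conv_nonneg' hμ0 hμ0) (conv_nonneg' hν0 hν0)
          (hasSum_conv hμ0 hμ0 hμ1 hμ1) (hasSum_conv hν0 hν0 hν1 hν1)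
          (conv_stdom hμ0 hν0 hμ1 hν1 h) (g_anti hc m) (g_nonneg hc m ⊤) (g_le_one hc m 0)
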